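/- For every a, b, c ∈ ℤ there exists h ∈ ℤ such that either R_H(a,b,c) = {r + h : r ∈ R_H(0,0,0)}, or R_H(a,b,c) = {r + h : r ∈ R_H(0,1,1)} = {r + h : r ∈ R_H(1,0,1)} = {r + h : r ∈ R_H(1,1,0)}. -/

import Mathlib

def H1 : ℤ × ℤ × ℤ → ℤ × ℤ × ℤ := fun t => (-t.1 + 1 + t.2.1 + t.2.2, t.2.1, t.2.2)
def H2 : ℤ × ℤ × ℤ → ℤ × ℤ × ℤ := fun t => (t.1, -t.2.1 + 1 + t.2.2 + t.1, t.2.2)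
def H3 : ℤ × ℤ × ℤ → ℤ × ℤ × ℤ := fun t => (t.1, t.2.1, -t.2.2 + 1 + t.1 + t.2.1)

/-- One step of the dynamics: apply one of `H1`, `H2`, `H3`. -/
def HStep (s t : ℤ × ℤ × ℤ) : Prop := t = H1 s ∨ t = H2 s ∨ t = H3 s

/-- The set of triples reachable from `(a,b,c)` by finitely many applications
of `H1`, `H2`, `H3` in any order. -/
def TH (a b c : ℤ) : Set (ℤ × ℤ × ℤ) := {t | Relation.ReflTransGen HStep (a, b, c) t}

/-- The set of integers represented as a component of a triple in `TH a b c`. -/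
def RH (a b c : ℤ) : Set ℤ :=
  {r | ∃ t ∈ TH a b c, r = t.1 ∨ r = t.2.1 ∨ r = t.2.2}

/-! ### Auxiliary lemmas -/

lemma hstep_symm : Symmetric HStep := by
  rintro ⟨x, y, z⟩ t (rfl | rfl | rfl)
  · exact Or.inl (by simp [H1, Prod.ext_iff]; omega)
  · exact Or.inr (Or.inl (by simp [H2, Prod.ext_iff]; omega))
  · exact Or.inr (Or.inr (by simp [H3, Prod.ext_iff]; omega))

lemma TH_eq_of_mem {a b c a' b' c' : ℤ} (h : (a', b', c') ∈ TH a b c) :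
    TH a b c = TH a' b' c' := by
  ext t
  constructor
  · intro ht
    exact ((haveI : Std.Symm HStep := ⟨fun _ _ h => hstep_symm h⟩; Std.Symm.symm _ _ h : Relation.ReflTransGen HStep (a', b', c') (a, b, c))).trans ht
  · intro ht
    exact Relation.ReflTransGen.trans h ht

lemma RH_eq_of_mem {a b c a' b' c' : ℤ} (h : (a', b', c') ∈ TH a b c) :
    RH a b c = RH a' b' c' := by
  unfold RH
  rw [TH_eq_of_mem h]

lemma RH_H1 (a b c : ℤ) : RH a b c = RH (-a + 1 + b + c) b c :=
  RH_eq_of_mem (Relation.ReflTransGen.single (Or.inl rfl))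

lemma RH_H2 (a b c : ℤ) : RH a b c = RH a (-b + 1 + c + a) c :=
  RH_eq_of_mem (Relation.ReflTransGen.single (Or.inr (Or.inl rfl)))

lemma RH_H3 (a b c : ℤ) : RH a b c = RH a b (-c + 1 + a + b) :=
  RH_eq_of_mem (Relation.ReflTransGen.single (Or.inr (Or.inr rfl)))

/-- swap the first two coordinates -/
def sw12 : ℤ × ℤ × ℤ → ℤ × ℤ × ℤ := fun t => (t.2.1, t.1, t.2.2)

/-- swap the last two coordinates -/
def sw23 : ℤ × ℤ × ℤ → ℤ × ℤ × ℤ := fun t => (t.1, t.2.2, t.2.1)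

lemma hstep_sw12 : ∀ s t, HStep s t → HStep (sw12 s) (sw12 t) := by
  rintro ⟨x, y, z⟩ t (rfl | rfl | rfl)
  · exact Or.inr (Or.inl (by simp [H1, H2, sw12, Prod.ext_iff]; omega))
  · exact Or.inl (by simp [H1, H2, sw12, Prod.ext_iff]; omega)
  · exact Or.inr (Or.inr (by simp [H3, sw12, Prod.ext_iff]; omega))

lemma hstep_sw23 : ∀ s t, HStep s t → HStep (sw23 s) (sw23 t) := by
  rintro ⟨x, y, z⟩ t (rfl | rfl | rfl)
  · exact Or.inl (by simp [H1, sw23, Prod.ext_iff]; omega)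
  · exact Or.inr (Or.inr (by simp [H2, H3, sw23, Prod.ext_iff]; omega))
  · exact Or.inr (Or.inl (by simp [H2, H3, sw23, Prod.ext_iff]; omega))

lemma TH_sw12 {a b c : ℤ} {t : ℤ × ℤ × ℤ} (h : t ∈ TH a b c) : sw12 t ∈ TH b a c :=
  Relation.ReflTransGen.lift sw12 hstep_sw12 _ _ h

lemma TH_sw23 {a b c : ℤ} {t : ℤ × ℤ × ℤ} (h : t ∈ TH a b c) : sw23 t ∈ TH a c b :=
  Relation.ReflTransGen.lift sw23 hstep_sw23 _ _ h

lemma RH_swap12_le (a b c : ℤ) : RH a b c ⊆ RH b a c := by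
  rintro r ⟨t, ht, hr⟩
  exact ⟨sw12 t, TH_sw12 ht, by simp only [sw12]; tauto⟩

lemma RH_swap12 (a b c : ℤ) : RH a b c = RH b a c :=
  Set.Subset.antisymm (RH_swap12_le a b c) (RH_swap12_le b a c)

lemma RH_swap23_le (a b c : ℤ) : RH a b c ⊆ RH a c b := by
  rintro r ⟨t, ht, hr⟩
  exact ⟨sw23 t, TH_sw23 ht, by simp only [sw23]; tauto⟩

lemma RH_swap23 (a b c : ℤ) : RH a b c = RH a c b :=
  Set.Subset.antisymm (RH_swap23_le a b c) (RH_swap23_le a c b)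

/-- translation by `h` in all coordinates -/
def tau (h : ℤ) : ℤ × ℤ × ℤ → ℤ × ℤ × ℤ := fun t => (t.1 + h, t.2.1 + h, t.2.2 + h)

lemma hstep_tau (h : ℤ) : ∀ s t, HStep s t → HStep (tau h s) (tau h t) := by
  rintro ⟨x, y, z⟩ t (rfl | rfl | rfl)
  · exact Or.inl (by simp [H1, tau, Prod.ext_iff]; omega)
  · exact Or.inr (Or.inl (by simp [H2, tau, Prod.ext_iff]; omega))
  · exact Or.inr (Or.inr (by simp [H3, tau, Prod.ext_iff]; omega))

lemma TH_tau {a b c : ℤ} (h : ℤ) {t : ℤ × ℤ × ℤ} (ht : t ∈ TH a b c) :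
    tau h t ∈ TH (a + h) (b + h) (c + h) :=
  Relation.ReflTransGen.lift (tau h) (hstep_tau h) _ _ ht

lemma RH_shift_le (a b c h : ℤ) {r : ℤ} (hr : r ∈ RH a b c) :
    r + h ∈ RH (a + h) (b + h) (c + h) := by
  obtain ⟨t, ht, hcomp⟩ := hr
  exact ⟨tau h t, TH_tau h ht, by simp only [tau]; omega⟩

lemma RH_shift (a b c h : ℤ) :
    RH (a + h) (b + h) (c + h) = (fun r : ℤ => r + h) '' RH a b c := by
  ext r
  constructor
  · intro hr
    have := RH_shift_le (a + h) (b + h) (c + h) (-h) hr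
    simp only [add_neg_cancel_right] at this
    exact ⟨r + -h, this, by ring⟩
  · rintro ⟨x, hx, rfl⟩
    exact RH_shift_le a b c h hx

/-- the conclusion of the theorem, as a predicate -/
def Good (a b c : ℤ) : Prop :=
  ∃ h : ℤ,
    RH a b c = (fun r : ℤ => r + h) '' RH 0 0 0 ∨
      (RH a b c = (fun r : ℤ => r + h) '' RH 0 1 1 ∧
        RH a b c = (fun r : ℤ => r + h) '' RH 1 0 1 ∧
        RH a b c = (fun r : ℤ => r + h) '' RH 1 1 0)

lemma good_congr {a b c a' b' c' : ℤ} (h : RH a b c = RH a' b' c') :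
    Good a' b' c' → Good a b c := by
  rintro ⟨h0, H⟩
  exact ⟨h0, by rw [h]; exact H⟩

lemma good_diag (h : ℤ) : Good h h h := by
  refine ⟨h, Or.inl ?_⟩
  have := RH_shift 0 0 0 h
  simpa using this

lemma good_011 (h : ℤ) : Good h (h + 1) (h + 1) := by
  refine ⟨h, Or.inr ⟨?_, ?_, ?_⟩⟩
  · have := RH_shift 0 1 1 h
    rw [show (0 : ℤ) + h = h by ring, show (1 : ℤ) + h = h + 1 by ring] at this
    exact this
  · rw [← RH_swap12 0 1 1]
    have := RH_shift 0 1 1 h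
    rw [show (0 : ℤ) + h = h by ring, show (1 : ℤ) + h = h + 1 by ring] at this
    exact this
  · rw [RH_swap23 1 1 0, ← RH_swap12 0 1 1]
    have := RH_shift 0 1 1 h
    rw [show (0 : ℤ) + h = h by ring, show (1 : ℤ) + h = h + 1 by ring] at this
    exact this

lemma key : ∀ n : ℕ, ∀ a b c : ℤ,
    (b - a).natAbs + (c - b).natAbs + (c - a).natAbs ≤ n → Good a b c := by
  intro n
  induction n using Nat.strong_induction_on with
  | _ n IH =>
  suffices hs : ∀ a b c : ℤ, a ≤ b → b ≤ c →
      (b - a).natAbs + (c - b).natAbs + (c - a).natAbs ≤ n → Good a b c by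
    intro a b c hn
    rcases le_total a b with hab | hab <;> rcases le_total b c with hbc | hbc <;>
      rcases le_total a c with hac | hac
    · exact hs a b c hab hbc (by omega)
    · exact hs a b c hab hbc (by omega)
    · exact good_congr (RH_swap23 a b c) (hs a c b hac hbc (by omega))
    · exact good_congr ((RH_swap23 a b c).trans (RH_swap12 a c b))
        (hs c a b hac hab (by omega))
    · exact good_congr (RH_swap12 a b c) (hs b a c hab hac (by omega))
    · exact good_congr ((RH_swap12 a b c).trans (RH_swap23 b a c))
        (hs b c a hbc hac (by omega))
    · exact good_congr (((RH_swap12 a b c).trans (RH_swap23 b a c)).trans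
        (RH_swap12 b c a)) (hs c b a hbc hab (by omega))
    · exact good_congr (((RH_swap12 a b c).trans (RH_swap23 b a c)).trans
        (RH_swap12 b c a)) (hs c b a hbc hab (by omega))
  intro a b c hab hbc hn
  rcases le_or_gt c (a + 1) with hsmall | hbig
  · -- base cases
    have : (b = a ∧ c = a) ∨ (b = a ∧ c = a + 1) ∨ (b = a + 1 ∧ c = a + 1) := by omega
    rcases this with ⟨h1, h2⟩ | ⟨h1, h2⟩ | ⟨h1, h2⟩
    · rw [h1, h2]; exact good_diag a
    · rw [h1, h2]
      have e := RH_H3 a a (a + 1)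
      rw [show -(a + 1) + 1 + a + a = a by ring] at e
      exact good_congr e (good_diag a)
    · rw [h1, h2]; exact good_011 a
  · -- descent
    rcases lt_or_eq_of_le hbc with hblc | hbec
    · -- b < c : apply H3
      refine good_congr (RH_H3 a b c) (IH (n - 1) (by omega) a b (-c + 1 + a + b) (by omega))
    · -- b = c : apply H2 then H3
      subst hbec
      have e2 := RH_H2 a b b
      rw [show -b + 1 + b + a = a + 1 by ring] at e2
      have e3 := RH_H3 a (a + 1) b
      refine good_congr e2 (good_congr e3 (IH (n - 1) (by omega) a (a + 1)
        (-b + 1 + a + (a + 1)) (by omega)))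

theorem four_towers (a b c : ℤ) :
    ∃ h : ℤ,
      RH a b c = (fun r : ℤ => r + h) '' RH 0 0 0 ∨
        (RH a b c = (fun r : ℤ => r + h) '' RH 0 1 1 ∧
          RH a b c = (fun r : ℤ => r + h) '' RH 1 0 1 ∧
          RH a b c = (fun r : ℤ => r + h) '' RH 1 1 0) := by
  exact key ((b - a).natAbs + (c - b).natAbs + (c - a).natAbs) a b c le_rfl
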